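/- Every prime element π of ℤ[τ] with 1 < π < τ satisfies |σ(π)| ≥ 2τ, where τ = (1 + √5)/2 is the golden ratio and σ is the nontrivial automorphism of ℚ(√5) (so σ(τ) = 1 − τ). -/
import Mathlib


/-- The golden ratio `τ = (1 + √5)/2`. -/
noncomputable def tau : ℝ := (1 + Real.sqrt 5) / 2

/-- The ring `ℤ[τ]`, the ring of integers of `ℚ(√5)`, realised as a subring of `ℝ`. -/
def Ztau : Subring ℝ := Subring.closure {tau}

/-- Every prime element `π` of `ℤ[τ]` with `1 < π < τ` satisfies `|σ(π)| ≥ 2τ`, where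
`σ` is the nontrivial automorphism of `ℚ(√5)`, so that `σ(a + bτ) = a + b(1 - τ)`. -/
theorem stmt11 (π : Ztau) (hπ : Prime π)
    (h1 : 1 < (π : ℝ)) (h2 : (π : ℝ) < tau) :
    ∀ a b : ℤ, (π : ℝ) = (a : ℝ) + (b : ℝ) * tau →
      2 * tau ≤ |(a : ℝ) + (b : ℝ) * (1 - tau)| := by
  intro a b hab
  by_contra hy
  push_neg at hy
  rw [abs_lt] at hy
  obtain ⟨hy1, hy2⟩ := hy
  set r := Real.sqrt 5 with hr
  have hrsq : r ^ 2 = 5 := Real.sq_sqrt (by norm_num)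
  have hr1 : (2.236 : ℝ) < r := by nlinarith [Real.sqrt_nonneg 5]
  have hr2 : r < 2.2361 := by nlinarith [Real.sqrt_nonneg 5]
  have htau : tau = (1 + r) / 2 := rfl
  rw [hab, htau] at h1 h2
  rw [htau] at hy1 hy2
  -- bounds on b
  have hb0 : 0 ≤ b := by
    by_contra hb
    push_neg at hb
    have hb' : (b : ℝ) ≤ ((-1 : ℤ) : ℝ) := Int.cast_le.mpr (by omega)
    push_cast at hb'
    nlinarith [mul_le_mul_of_nonneg_right hb' (le_of_lt (lt_trans (by norm_num) hr1))]
  have hb2 : b ≤ 2 := by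
    by_contra hb
    push_neg at hb
    have hb' : ((3 : ℤ) : ℝ) ≤ (b : ℝ) := Int.cast_le.mpr (by omega)
    push_cast at hb'
    nlinarith [mul_le_mul_of_nonneg_right hb' (le_of_lt (lt_trans (by norm_num) hr1))]
  have hb0' : (0 : ℝ) ≤ (b : ℝ) := by exact_mod_cast hb0
  have hb2' : (b : ℝ) ≤ 2 := by exact_mod_cast hb2
  -- bounds on a
  have ha1 : -2 ≤ a := by
    by_contra ha
    push_neg at ha
    have ha' : (a : ℝ) ≤ ((-3 : ℤ) : ℝ) := Int.cast_le.mpr (by omega)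
    push_cast at ha'
    nlinarith [mul_le_mul_of_nonneg_left hr2.le hb0']
  have ha2 : a ≤ 1 := by
    by_contra ha
    push_neg at ha
    have ha' : ((2 : ℤ) : ℝ) ≤ (a : ℝ) := Int.cast_le.mpr (by omega)
    push_cast at ha'
    nlinarith [mul_nonneg hb0' (le_of_lt (lt_trans (by norm_num) hr1))]
  interval_cases a <;> interval_cases b <;>
    (push_cast at h1 h2 hy1 hy2 ⊢) <;> linarith
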